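/- arXiv:math/0312379 — 3 statements merged into one kernel-verified Lean document; each statement's English description precedes it below -/
import Mathlib

section
/- Let B₆ be the Artin braid group on 6 strands with generators σ₁, …, σ₅. In the quotient group B₆/⟨⟨σ₃σ₄σ₅²σ₄σ₃σ₂σ₁²σ₂⟩⟩ (quotient by the normal closure of the single element σ₃σ₄σ₅²σ₄σ₃σ₂σ₁²σ₂), the identity σ₂⁻¹σ₁⁻²σ₂⁻¹σ₃σ₂σ₁²σ₂ = σ₄⁻¹σ₅⁻²σ₄⁻¹σ₃σ₄σ₅²σ₄ holds. -/
/-- The braid relations on `n` generators `σ₁, …, σₙ` (indexed by `Fin n`):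
commutation `σᵢσⱼ = σⱼσᵢ` for `|i−j| ≥ 2` and `σᵢσᵢ₊₁σᵢ = σᵢ₊₁σᵢσᵢ₊₁`. -/
def braidRels (n : ℕ) : Set (FreeGroup (Fin n)) :=
  {r | ∃ i j : Fin n, (i : ℕ) + 2 ≤ (j : ℕ) ∧
      r = FreeGroup.of i * FreeGroup.of j * (FreeGroup.of i)⁻¹ * (FreeGroup.of j)⁻¹} ∪
  {r | ∃ i j : Fin n, (j : ℕ) = (i : ℕ) + 1 ∧
      r = FreeGroup.of i * FreeGroup.of j * FreeGroup.of i *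
        (FreeGroup.of j * FreeGroup.of i * FreeGroup.of j)⁻¹}

/-- The Artin braid group `B₆` on 6 strands (5 generators). -/
abbrev B6 : Type := PresentedGroup (braidRels 5)

/-- The standard generators `σ₁, …, σ₅` of `B₆` (indexed by `Fin 5`, so `σⱼ₊₁ = g j`). -/
def g (i : Fin 5) : B6 := PresentedGroup.of i


private theorem braidKey {G : Type*} [Group G] (a b c : G)
    (h1 : a * b * a = b * a * b) (h2 : b * c * b = c * b * c) (h3 : a * c = c * a) :
    a * (b * (c * c) * b) * (a * (b * (c * c) * b)) =
      b * (c * c) * b * a * (b * (c * c) * b * a) := by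
  have hac : ∀ x : G, a * (c * x) = c * (a * x) := by
    intro x; rw [← mul_assoc, h3, mul_assoc]
  have hab : ∀ x : G, a * (b * (a * x)) = b * (a * (b * x)) := by
    intro x; rw [← mul_assoc, ← mul_assoc, h1, mul_assoc, mul_assoc]
  have hbc : ∀ x : G, b * (c * (b * x)) = c * (b * (c * x)) := by
    intro x; rw [← mul_assoc, ← mul_assoc, h2, mul_assoc, mul_assoc]
  have key' : ∀ x : G,
      a * (b * (c * (c * (b * (a * (b * (c * (c * (b * (x)))))))))) =
      b * (c * (c * (b * (a * (b * (c * (c * (b * (a * (x)))))))))) := by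
    intro x
    calc a * (b * (c * (c * (b * (a * (b * (c * (c * (b * (x))))))))))
      _ = a * (b * (c * (c * (a * (b * (a * (c * (c * (b * (x)))))))))) := congrArg (a * ·) (congrArg (b * ·) (congrArg (c * ·) (congrArg (c * ·) ((hab (c * (c * (b * (x))))).symm))))
      _ = a * (b * (c * (c * (a * (b * (c * (a * (c * (b * (x)))))))))) := congrArg (a * ·) (congrArg (b * ·) (congrArg (c * ·) (congrArg (c * ·) (congrArg (a * ·) (congrArg (b * ·) (hac (c * (b * (x)))))))))
      _ = a * (b * (c * (c * (a * (b * (c * (c * (a * (b * (x)))))))))) := congrArg (a * ·) (congrArg (b * ·) (congrArg (c * ·) (congrArg (c * ·) (congrArg (a * ·) (congrArg (b * ·) (congrArg (c * ·) (hac (b * (x)))))))))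
      _ = a * (b * (c * (a * (c * (b * (c * (c * (a * (b * (x)))))))))) := congrArg (a * ·) (congrArg (b * ·) (congrArg (c * ·) ((hac (b * (c * (c * (a * (b * (x))))))).symm)))
      _ = a * (b * (a * (c * (c * (b * (c * (c * (a * (b * (x)))))))))) := congrArg (a * ·) (congrArg (b * ·) ((hac (c * (b * (c * (c * (a * (b * (x)))))))).symm))
      _ = b * (a * (b * (c * (c * (b * (c * (c * (a * (b * (x)))))))))) := hab (c * (c * (b * (c * (c * (a * (b * (x))))))))
      _ = b * (a * (b * (c * (b * (c * (b * (c * (a * (b * (x)))))))))) := congrArg (b * ·) (congrArg (a * ·) (congrArg (b * ·) (congrArg (c * ·) ((hbc (c * (a * (b * (x))))).symm))))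
      _ = b * (a * (c * (b * (c * (c * (b * (c * (a * (b * (x)))))))))) := congrArg (b * ·) (congrArg (a * ·) (hbc (c * (b * (c * (a * (b * (x))))))))
      _ = b * (c * (a * (b * (c * (c * (b * (c * (a * (b * (x)))))))))) := congrArg (b * ·) (hac (b * (c * (c * (b * (c * (a * (b * (x)))))))))
      _ = b * (c * (a * (b * (c * (b * (c * (b * (a * (b * (x)))))))))) := congrArg (b * ·) (congrArg (c * ·) (congrArg (a * ·) (congrArg (b * ·) (congrArg (c * ·) ((hbc (a * (b * (x)))).symm)))))
      _ = b * (c * (a * (b * (c * (b * (c * (a * (b * (a * (x)))))))))) := congrArg (b * ·) (congrArg (c * ·) (congrArg (a * ·) (congrArg (b * ·) (congrArg (c * ·) (congrArg (b * ·) (congrArg (c * ·) ((hab (x)).symm)))))))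
      _ = b * (c * (a * (b * (c * (b * (a * (c * (b * (a * (x)))))))))) := congrArg (b * ·) (congrArg (c * ·) (congrArg (a * ·) (congrArg (b * ·) (congrArg (c * ·) (congrArg (b * ·) ((hac (b * (a * (x)))).symm))))))
      _ = b * (c * (a * (c * (b * (c * (a * (c * (b * (a * (x)))))))))) := congrArg (b * ·) (congrArg (c * ·) (congrArg (a * ·) (hbc (a * (c * (b * (a * (x))))))))
      _ = b * (c * (c * (a * (b * (c * (a * (c * (b * (a * (x)))))))))) := congrArg (b * ·) (congrArg (c * ·) (hac (b * (c * (a * (c * (b * (a * (x)))))))))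
      _ = b * (c * (c * (a * (b * (a * (c * (c * (b * (a * (x)))))))))) := congrArg (b * ·) (congrArg (c * ·) (congrArg (c * ·) (congrArg (a * ·) (congrArg (b * ·) ((hac (c * (b * (a * (x))))).symm)))))
      _ = b * (c * (c * (b * (a * (b * (c * (c * (b * (a * (x)))))))))) := congrArg (b * ·) (congrArg (c * ·) (congrArg (c * ·) (hab (c * (c * (b * (a * (x))))))))
  have h := key' 1
  simp only [mul_one] at h
  calc a * (b * (c * c) * b) * (a * (b * (c * c) * b))
      = a * (b * (c * (c * (b * (a * (b * (c * (c * b)))))))) := by group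
    _ = b * (c * (c * (b * (a * (b * (c * (c * (b * a)))))))) := h
    _ = b * (c * c) * b * a * (b * (c * c) * b * a) := by group

/-- In `B₆/⟨⟨σ₃σ₄σ₅²σ₄σ₃σ₂σ₁²σ₂⟩⟩`, the identity
`σ₂⁻¹σ₁⁻²σ₂⁻¹σ₃σ₂σ₁²σ₂ = σ₄⁻¹σ₅⁻²σ₄⁻¹σ₃σ₄σ₅²σ₄` holds. -/
theorem stmt3 :
    QuotientGroup.mk (s := Subgroup.normalClosure
        {g 2 * g 3 * g 4 ^ 2 * g 3 * g 2 * g 1 * g 0 ^ 2 * g 1})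
      ((g 1)⁻¹ * (g 0 ^ 2)⁻¹ * (g 1)⁻¹ * g 2 * g 1 * g 0 ^ 2 * g 1) =
    QuotientGroup.mk (s := Subgroup.normalClosure
        {g 2 * g 3 * g 4 ^ 2 * g 3 * g 2 * g 1 * g 0 ^ 2 * g 1})
      ((g 3)⁻¹ * (g 4 ^ 2)⁻¹ * (g 3)⁻¹ * g 2 * g 3 * g 4 ^ 2 * g 3) := by
  classical
  set N := Subgroup.normalClosure
      {g 2 * g 3 * g 4 ^ 2 * g 3 * g 2 * g 1 * g 0 ^ 2 * g 1} with hN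
  let π : B6 →* B6 ⧸ N := QuotientGroup.mk' N
  have hq : ∀ x : B6, (QuotientGroup.mk x : B6 ⧸ N) = π x := fun x => rfl
  -- braid relations in B6
  have hrel : ∀ r ∈ braidRels 5, (QuotientGroup.mk r : PresentedGroup (braidRels 5)) = 1 := by
    intro r hr
    exact (QuotientGroup.eq_one_iff r).2 (Subgroup.subset_normalClosure hr)
  have hcomm : ∀ i j : Fin 5, (i : ℕ) + 2 ≤ (j : ℕ) → g i * g j = g j * g i := by
    intro i j hij
    have h := hrel _ (Or.inl ⟨i, j, hij, rfl⟩)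
    simp only [QuotientGroup.mk_mul, QuotientGroup.mk_inv] at h
    have h' : g i * g j * (g i)⁻¹ * (g j)⁻¹ = 1 := h
    rw [mul_inv_eq_one, mul_inv_eq_iff_eq_mul] at h'
    exact h'
  have hbraid : ∀ i j : Fin 5, (j : ℕ) = (i : ℕ) + 1 →
      g i * g j * g i = g j * g i * g j := by
    intro i j hij
    have h := hrel _ (Or.inr ⟨i, j, hij, rfl⟩)
    simp only [QuotientGroup.mk_mul, QuotientGroup.mk_inv] at h
    have h' : g i * g j * g i * (g j * g i * g j)⁻¹ = 1 := h
    rw [mul_inv_eq_one] at h'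
    exact h'
  -- push relations to the quotient
  have h1 : π (g 2) * π (g 3) * π (g 2) = π (g 3) * π (g 2) * π (g 3) := by
    rw [← map_mul, ← map_mul, ← map_mul, ← map_mul, hbraid 2 3 rfl]
  have h2 : π (g 3) * π (g 4) * π (g 3) = π (g 4) * π (g 3) * π (g 4) := by
    rw [← map_mul, ← map_mul, ← map_mul, ← map_mul, hbraid 3 4 rfl]
  have h3 : π (g 2) * π (g 4) = π (g 4) * π (g 2) := by
    rw [← map_mul, ← map_mul, hcomm 2 4 (by decide)]
  -- the extra relation
  have hRmem : g 2 * g 3 * g 4 ^ 2 * g 3 * g 2 * g 1 * g 0 ^ 2 * g 1 ∈ N := by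
    exact Subgroup.subset_normalClosure rfl
  have hR : π (g 2) * π (g 3) * (π (g 4) * π (g 4)) * π (g 3) * π (g 2) * π (g 1) *
      (π (g 0) * π (g 0)) * π (g 1) = 1 := by
    have h := (QuotientGroup.eq_one_iff _).2 hRmem
    have h' : π (g 2 * g 3 * g 4 ^ 2 * g 3 * g 2 * g 1 * g 0 ^ 2 * g 1) = 1 := h
    simp only [map_mul, map_pow, pow_two] at h'
    calc π (g 2) * π (g 3) * (π (g 4) * π (g 4)) * π (g 3) * π (g 2) * π (g 1) *
        (π (g 0) * π (g 0)) * π (g 1)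
        = π (g 2) * π (g 3) * (π (g 4) * π (g 4)) * π (g 3) * π (g 2) * π (g 1) *
          (π (g 0) * π (g 0)) * π (g 1) := rfl
      _ = 1 := by rw [← h']
  set a0 := π (g 0); set a1 := π (g 1); set a2 := π (g 2)
  set a3 := π (g 3); set a4 := π (g 4)
  have keyQ := braidKey a2 a3 a4 h1 h2 h3
  have hA : a1 * (a0 * a0 * a1) = (a2 * (a3 * (a4 * a4) * a3) * a2)⁻¹ := by
    rw [eq_inv_iff_mul_eq_one]
    calc a1 * (a0 * a0 * a1) * (a2 * (a3 * (a4 * a4) * a3) * a2)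
        = (a2 * (a3 * (a4 * a4) * a3) * a2)⁻¹ *
            (a2 * a3 * (a4 * a4) * a3 * a2 * a1 * (a0 * a0) * a1) *
            (a2 * (a3 * (a4 * a4) * a3) * a2) := by (first | group | skip) <;> simp only [pow_two, zpow_two, mul_assoc]
      _ = 1 := by rw [hR]; (first | group | skip) <;> simp only [pow_two, zpow_two, mul_assoc]
  rw [hq, hq]
  simp only [map_mul, map_inv, map_pow, pow_two]
  calc a1⁻¹ * (a0 * a0)⁻¹ * a1⁻¹ * a2 * a1 * (a0 * a0) * a1
      = (a1 * (a0 * a0 * a1))⁻¹ * a2 * (a1 * (a0 * a0 * a1)) := by (first | group | skip) <;> simp only [pow_two, zpow_two, mul_assoc]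
    _ = (a2 * (a3 * (a4 * a4) * a3) * a2) * a2 * (a2 * (a3 * (a4 * a4) * a3) * a2)⁻¹ := by
          rw [hA]; (first | group | skip) <;> simp only [pow_two, zpow_two, mul_assoc]
    _ = (a3 * (a4 * a4) * a3)⁻¹ *
          (a3 * (a4 * a4) * a3 * a2 * (a3 * (a4 * a4) * a3 * a2)) *
          ((a3 * (a4 * a4) * a3)⁻¹ * a2⁻¹) := by
          (first | group | skip) <;> simp only [pow_two, zpow_two, mul_assoc]
    _ = (a3 * (a4 * a4) * a3)⁻¹ *
          (a2 * (a3 * (a4 * a4) * a3) * (a2 * (a3 * (a4 * a4) * a3))) *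
          ((a3 * (a4 * a4) * a3)⁻¹ * a2⁻¹) := by rw [← keyQ]
    _ = a3⁻¹ * (a4 * a4)⁻¹ * a3⁻¹ * a2 * a3 * (a4 * a4) * a3 := by (first | group | skip) <;> simp only [pow_two, zpow_two, mul_assoc]
end

section
/- Let G̃ be the group with presentation on generators Γ₁, Γ₂, Γ₃, Γ₄, Γ₅ and relations: ΓᵢΓⱼΓᵢ = ΓⱼΓᵢΓⱼ for (i,j) ∈ {(1,2),(1,3),(2,3),(2,4),(2,5),(4,5)}; ΓᵢΓⱼ = ΓⱼΓᵢ for (i,j) ∈ {(1,4),(1,5),(3,4),(3,5)}; Γ₁ commutes with both Γ₃Γ₂Γ₃⁻¹ and Γ₃⁻¹Γ₂Γ₃; Γ₄ commutes with both Γ₅Γ₂Γ₅⁻¹ and Γ₅⁻¹Γ₂Γ₅. Then in G̃ the identity Γ₁⁻¹Γ₂Γ₃⁻²Γ₁Γ₃²Γ₂⁻¹Γ₁ = Γ₂ holds. -/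
open scoped commutatorElement

/-- The defining relations of the group `G̃` on generators `Γ₁, …, Γ₅` (indexed by
`Fin 5`, where index `i` corresponds to `Γᵢ₊₁`): braid relations `ΓᵢΓⱼΓᵢ = ΓⱼΓᵢΓⱼ` for
`(i,j) ∈ {(1,2),(1,3),(2,3),(2,4),(2,5),(4,5)}`, commutation `ΓᵢΓⱼ = ΓⱼΓᵢ` for
`(i,j) ∈ {(1,4),(1,5),(3,4),(3,5)}`, `Γ₁` commutes with `Γ₃Γ₂Γ₃⁻¹` and `Γ₃⁻¹Γ₂Γ₃`,
and `Γ₄` commutes with `Γ₅Γ₂Γ₅⁻¹` and `Γ₅⁻¹Γ₂Γ₅`. -/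
def tildeRels : Set (FreeGroup (Fin 5)) :=
  let Γ : Fin 5 → FreeGroup (Fin 5) := FreeGroup.of
  { Γ 0 * Γ 1 * Γ 0 * (Γ 1 * Γ 0 * Γ 1)⁻¹,
    Γ 0 * Γ 2 * Γ 0 * (Γ 2 * Γ 0 * Γ 2)⁻¹,
    Γ 1 * Γ 2 * Γ 1 * (Γ 2 * Γ 1 * Γ 2)⁻¹,
    Γ 1 * Γ 3 * Γ 1 * (Γ 3 * Γ 1 * Γ 3)⁻¹,
    Γ 1 * Γ 4 * Γ 1 * (Γ 4 * Γ 1 * Γ 4)⁻¹,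
    Γ 3 * Γ 4 * Γ 3 * (Γ 4 * Γ 3 * Γ 4)⁻¹,
    ⁅Γ 0, Γ 3⁆, ⁅Γ 0, Γ 4⁆, ⁅Γ 2, Γ 3⁆, ⁅Γ 2, Γ 4⁆,
    ⁅Γ 0, Γ 2 * Γ 1 * (Γ 2)⁻¹⁆, ⁅Γ 0, (Γ 2)⁻¹ * Γ 1 * Γ 2⁆,
    ⁅Γ 3, Γ 4 * Γ 1 * (Γ 4)⁻¹⁆, ⁅Γ 3, (Γ 4)⁻¹ * Γ 1 * Γ 4⁆ }

/-- The group `G̃` (the quotient `B̃₆` of the braid group `B₆`). -/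
abbrev Gtilde : Type := PresentedGroup tildeRels

/-- The generators `Γ₁, …, Γ₅` of `G̃` (index `i : Fin 5` corresponds to `Γᵢ₊₁`). -/
def γ (i : Fin 5) : Gtilde := PresentedGroup.of i

/-- Abstract form of the argument: in any group, the braid relations on `a, b, c`
together with `[a, c⁻¹bc] = [a, cbc⁻¹] = 1` imply `a⁻¹bc⁻²ac²b⁻¹a = b`. -/
theorem key_lemma {G : Type*} [Group G] (a b c : G)
    (hab : a * b * a = b * a * b)
    (hac : a * c * a = c * a * c)
    (hbc : b * c * b = c * b * c)
    (h1 : a * (c⁻¹ * b * c) = (c⁻¹ * b * c) * a)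
    (h2 : a * (c * b * c⁻¹) = (c * b * c⁻¹) * a) :
    a⁻¹ * b * (c ^ 2)⁻¹ * a * c ^ 2 * b⁻¹ * a = b := by
  have e1 : c⁻¹ * a * c = a * c * a⁻¹ := by
    rw [show c⁻¹ * a * c = c⁻¹ * (a * c * a) * a⁻¹ by group, hac]; group
  have e2 : b * c * b⁻¹ = c⁻¹ * b * c := by
    rw [show b * c * b⁻¹ = c⁻¹ * (c * b * c) * b⁻¹ by group, ← hbc]; group
  have e2' : b * c⁻¹ * b⁻¹ = c⁻¹ * b⁻¹ * c := by
    have := congrArg (·⁻¹) e2; simpa [mul_assoc] using this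
  have e3 : b⁻¹ * a * b = a * b * a⁻¹ := by
    rw [show b⁻¹ * a * b = b⁻¹ * (a * b * a) * a⁻¹ by group, hab]; group
  have F1' : (c⁻¹ * a * c) * b = b * (c⁻¹ * a * c) := by
    rw [show (c⁻¹ * a * c) * b = c⁻¹ * (a * (c * b * c⁻¹)) * c by group, h2]; group
  have F1 : b * (c⁻¹ * a * c) * b⁻¹ = c⁻¹ * a * c := by
    rw [show b * (c⁻¹ * a * c) * b⁻¹ = (b * (c⁻¹ * a * c)) * b⁻¹ by group, ← F1']; group
  have F2 : a⁻¹ * (c⁻¹ * b * c) * a = c⁻¹ * b * c := by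
    rw [show a⁻¹ * (c⁻¹ * b * c) * a = a⁻¹ * ((c⁻¹ * b * c) * a) by group, ← h1]; group
  rw [show c ^ 2 = c * c from sq c]
  calc a⁻¹ * b * (c * c)⁻¹ * a * (c * c) * b⁻¹ * a
      = a⁻¹ * (b * c⁻¹ * b⁻¹) * (b * (c⁻¹ * a * c) * b⁻¹) * (b * c * b⁻¹) * a := by group
    _ = a⁻¹ * (c⁻¹ * b⁻¹ * c) * (c⁻¹ * a * c) * (c⁻¹ * b * c) * a := by rw [F1, e2, e2']
    _ = a⁻¹ * c⁻¹ * (b⁻¹ * a * b) * c * a := by group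
    _ = a⁻¹ * c⁻¹ * (a * b * a⁻¹) * c * a := by rw [e3]
    _ = a⁻¹ * (c⁻¹ * a * c) * (c⁻¹ * b * c) * (c⁻¹ * a * c)⁻¹ * a := by group
    _ = a⁻¹ * (a * c * a⁻¹) * (c⁻¹ * b * c) * (a * c * a⁻¹)⁻¹ * a := by rw [e1]
    _ = c * (a⁻¹ * (c⁻¹ * b * c) * a) * c⁻¹ := by group
    _ = c * (c⁻¹ * b * c) * c⁻¹ := by rw [F2]
    _ = b := by group

/-- Any element of `tildeRels` maps to `1` in `G̃`. -/
lemma rel_eq_one {r : FreeGroup (Fin 5)} (h : r ∈ tildeRels) :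
    PresentedGroup.mk tildeRels r = 1 :=
  (QuotientGroup.eq_one_iff r).mpr (Subgroup.subset_normalClosure h)

lemma gamma_eq (i : Fin 5) : γ i = PresentedGroup.mk tildeRels (FreeGroup.of i) := rfl

lemma braid_rel {i j : Fin 5}
    (h : FreeGroup.of i * FreeGroup.of j * FreeGroup.of i *
        (FreeGroup.of j * FreeGroup.of i * FreeGroup.of j)⁻¹ ∈ tildeRels) :
    γ i * γ j * γ i = γ j * γ i * γ j := by
  have h1 := rel_eq_one h
  simp only [map_mul, map_inv, ← gamma_eq] at h1
  rw [← mul_inv_eq_one]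
  simpa [mul_assoc] using h1

lemma comm_rel {x y : FreeGroup (Fin 5)} (h : ⁅x, y⁆ ∈ tildeRels) :
    PresentedGroup.mk tildeRels x * PresentedGroup.mk tildeRels y =
      PresentedGroup.mk tildeRels y * PresentedGroup.mk tildeRels x := by
  have h1 := rel_eq_one h
  rw [map_commutatorElement] at h1
  exact commutatorElement_eq_one_iff_mul_comm.mp h1

lemma mem11 : ⁅(FreeGroup.of 0 : FreeGroup (Fin 5)),
    FreeGroup.of 2 * FreeGroup.of 1 * (FreeGroup.of 2)⁻¹⁆ ∈ tildeRels := by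
  unfold tildeRels
  exact Set.mem_insert_of_mem _ (Set.mem_insert_of_mem _ (Set.mem_insert_of_mem _
    (Set.mem_insert_of_mem _ (Set.mem_insert_of_mem _ (Set.mem_insert_of_mem _
    (Set.mem_insert_of_mem _ (Set.mem_insert_of_mem _ (Set.mem_insert_of_mem _
    (Set.mem_insert_of_mem _ (Set.mem_insert _ _))))))))))

lemma mem12 : ⁅(FreeGroup.of 0 : FreeGroup (Fin 5)),
    (FreeGroup.of 2)⁻¹ * FreeGroup.of 1 * FreeGroup.of 2⁆ ∈ tildeRels := by
  unfold tildeRels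
  exact Set.mem_insert_of_mem _ (Set.mem_insert_of_mem _ (Set.mem_insert_of_mem _
    (Set.mem_insert_of_mem _ (Set.mem_insert_of_mem _ (Set.mem_insert_of_mem _
    (Set.mem_insert_of_mem _ (Set.mem_insert_of_mem _ (Set.mem_insert_of_mem _
    (Set.mem_insert_of_mem _ (Set.mem_insert_of_mem _ (Set.mem_insert _ _)))))))))))

/-- In `G̃`, the identity `Γ₁⁻¹Γ₂Γ₃⁻²Γ₁Γ₃²Γ₂⁻¹Γ₁ = Γ₂` holds. -/
theorem stmt8 :
    (γ 0)⁻¹ * γ 1 * (γ 2 ^ 2)⁻¹ * γ 0 * γ 2 ^ 2 * (γ 1)⁻¹ * γ 0 = γ 1 := by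
  have hab : γ 0 * γ 1 * γ 0 = γ 1 * γ 0 * γ 1 := braid_rel (by
    unfold tildeRels; exact Set.mem_insert _ _)
  have hac : γ 0 * γ 2 * γ 0 = γ 2 * γ 0 * γ 2 := braid_rel (by
    unfold tildeRels; exact Set.mem_insert_of_mem _ (Set.mem_insert _ _))
  have hbc : γ 1 * γ 2 * γ 1 = γ 2 * γ 1 * γ 2 := braid_rel (by
    unfold tildeRels
    exact Set.mem_insert_of_mem _ (Set.mem_insert_of_mem _ (Set.mem_insert _ _)))
  have h1 : γ 0 * ((γ 2)⁻¹ * γ 1 * γ 2) = ((γ 2)⁻¹ * γ 1 * γ 2) * γ 0 := by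
    have := comm_rel mem12
    simpa only [map_mul, map_inv, ← gamma_eq] using this
  have h2 : γ 0 * (γ 2 * γ 1 * (γ 2)⁻¹) = (γ 2 * γ 1 * (γ 2)⁻¹) * γ 0 := by
    have := comm_rel mem11
    simpa only [map_mul, map_inv, ← gamma_eq] using this
  exact key_lemma (γ 0) (γ 1) (γ 2) hab hac hbc h1 h2
end

section
/- Let G̃ be the group with presentation on generators Γ₁, Γ₂, Γ₃, Γ₄, Γ₅ and relations: ΓᵢΓⱼΓᵢ = ΓⱼΓᵢΓⱼ for (i,j) ∈ {(1,2),(1,3),(2,3),(2,4),(2,5),(4,5)}; ΓᵢΓⱼ = ΓⱼΓᵢ for (i,j) ∈ {(1,4),(1,5),(3,4),(3,5)}; Γ₁ commutes with both Γ₃Γ₂Γ₃⁻¹ and Γ₃⁻¹Γ₂Γ₃; Γ₄ commutes with both Γ₅Γ₂Γ₅⁻¹ and Γ₅⁻¹Γ₂Γ₅. In the quotient of G̃ by the normal closure of the set of squares {Γ₁², Γ₂², Γ₃², Γ₄², Γ₅²}, the image of the word w = Γ₅Γ₃Γ₂Γ₄⁻¹Γ₂Γ₅⁻²Γ₄Γ₅²Γ₂⁻¹Γ₄Γ₅⁻¹Γ₄Γ₅²Γ₃Γ₂Γ₅⁻²Γ₄Γ₅²Γ₂⁻¹Γ₄Γ₂Γ₃⁻²Γ₁Γ₃²Γ₁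 is the identity element. -/
open scoped commutatorElement
set_option maxHeartbeats 1000000

def w : Gtilde :=
  γ 4 * γ 2 * γ 1 * (γ 3)⁻¹ * γ 1 * (γ 4 ^ 2)⁻¹ * γ 3 * γ 4 ^ 2 * (γ 1)⁻¹ * γ 3 *
    (γ 4)⁻¹ * γ 3 * γ 4 ^ 2 * γ 2 * γ 1 * (γ 4 ^ 2)⁻¹ * γ 3 * γ 4 ^ 2 * (γ 1)⁻¹ *
    γ 3 * γ 1 * (γ 2 ^ 2)⁻¹ * γ 0 * γ 2 ^ 2 * γ 0


private theorem word_calc {Q : Type*} [Group Q] (a b c d e : Q)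
    (hbd : b * d * b = d * b * d) (hcd : c * d = d * c) (hce : c * e = e * c)
    (ha2 : a * a = 1) (hb2 : b * b = 1) (hc2 : c * c = 1)
    (hd2 : d * d = 1) (he2 : e * e = 1) :
    e * c * b * d⁻¹ * b * (e * e)⁻¹ * d * (e * e) * b⁻¹ * d * e⁻¹ * d * (e * e) * c * b *
      (e * e)⁻¹ * d * (e * e) * b⁻¹ * d * b * (c * c)⁻¹ * a * (c * c) * a = 1 := by
  have hbi : b⁻¹ = b := inv_eq_of_mul_eq_one_right hb2
  have hdi : d⁻¹ = d := inv_eq_of_mul_eq_one_right hd2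
  have hei : e⁻¹ = e := inv_eq_of_mul_eq_one_right he2
  have key : ∀ x y : Q, x * y * x = y * x * y → x * x = 1 → y * y = 1 →
      x * y * (x * y) * (x * y) = 1 := by
    intro x y h hx hy
    calc x*y*(x*y)*(x*y) = (x*y*x)*(y*x*y) := by group
      _ = (x*y*x)*(x*y*x) := by rw [h]
      _ = x*y*(x*x)*(y*x) := by group
      _ = x*(y*y)*x := by rw [hx]; group
      _ = x*x := by rw [hy, mul_one]
      _ = 1 := hx
  have hbd6 : b*d*(b*d)*(b*d) = 1 := key b d hbd hb2 hd2
  have hdb6 : d*b*(d*b)*(d*b) = 1 := key d b hbd.symm hd2 hb2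
  rw [he2, hc2, hbi, hdi, hei]
  simp only [inv_one, mul_one, one_mul]
  calc e*c*b*d*b*d*b*d*e*d*c*b*d*b*d*b*a*a
      = e*c*(b*d*(b*d)*(b*d))*(e*(d*(c*(b*(d*(b*(d*b)))))))*(a*a) := by group
    _ = e*(c*e)*(d*(c*(b*(d*(b*(d*b)))))) := by rw [hbd6, ha2]; group
    _ = e*(e*c)*(d*(c*(b*(d*(b*(d*b)))))) := by rw [hce]
    _ = (e*e)*(c*(d*(c*(b*(d*(b*(d*b))))))) := by group
    _ = (c*d)*(c*(b*(d*(b*(d*b))))) := by rw [he2, one_mul]; group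
    _ = (d*c)*(c*(b*(d*(b*(d*b))))) := by rw [hcd]
    _ = d*(c*c)*(b*(d*(b*(d*b)))) := by group
    _ = d*b*(d*b)*(d*b) := by rw [hc2, mul_one]; group
    _ = 1 := hdb6

/-- In the quotient of `G̃` by the normal closure of the squares of the generators,
the image of the word `w` is the identity. -/
theorem stmt10 :
    QuotientGroup.mk (s := Subgroup.normalClosure
      {x : Gtilde | ∃ i : Fin 5, x = γ i ^ 2}) w =
    (1 : Gtilde ⧸ Subgroup.normalClosure {x : Gtilde | ∃ i : Fin 5, x = γ i ^ 2}) := by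
  set N := Subgroup.normalClosure {x : Gtilde | ∃ i : Fin 5, x = γ i ^ 2} with hN
  have hrel : ∀ r ∈ tildeRels,
      ((QuotientGroup.mk' N).comp (PresentedGroup.mk tildeRels)) r = 1 := by
    intro r hr
    have : PresentedGroup.mk tildeRels r = (1 : Gtilde) := by
      exact PresentedGroup.one_of_mem hr
    simp [this]
  set ψ : FreeGroup (Fin 5) →* Gtilde ⧸ N :=
    (QuotientGroup.mk' N).comp (PresentedGroup.mk tildeRels) with hψ
  have hof : ∀ i : Fin 5, ψ (FreeGroup.of i) =
      (QuotientGroup.mk (γ i) : Gtilde ⧸ N) := fun i => rfl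
  have hsq : ∀ i : Fin 5, (QuotientGroup.mk (γ i) : Gtilde ⧸ N) *
      (QuotientGroup.mk (γ i) : Gtilde ⧸ N) = 1 := by
    intro i
    rw [← QuotientGroup.mk_mul, ← pow_two, QuotientGroup.eq_one_iff]
    exact Subgroup.subset_normalClosure ⟨i, rfl⟩
  have hbd : (QuotientGroup.mk (γ 1) : Gtilde ⧸ N) * QuotientGroup.mk (γ 3) *
      QuotientGroup.mk (γ 1) =
      QuotientGroup.mk (γ 3) * QuotientGroup.mk (γ 1) * QuotientGroup.mk (γ 3) := by
    have h : (QuotientGroup.mk (γ 1) : Gtilde ⧸ N) * QuotientGroup.mk (γ 3) *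
        QuotientGroup.mk (γ 1) * (QuotientGroup.mk (γ 3) * QuotientGroup.mk (γ 1) *
        QuotientGroup.mk (γ 3))⁻¹ = 1 := by
      have := hrel _ (by simp [tildeRels] : (FreeGroup.of (1:Fin 5) * FreeGroup.of 3 *
        FreeGroup.of 1 * (FreeGroup.of 3 * FreeGroup.of 1 * FreeGroup.of 3)⁻¹) ∈ tildeRels)
      simpa only [map_mul, map_inv, hof] using this
    exact mul_inv_eq_one.mp h
  have hcd : (QuotientGroup.mk (γ 2) : Gtilde ⧸ N) * QuotientGroup.mk (γ 3) =
      QuotientGroup.mk (γ 3) * QuotientGroup.mk (γ 2) := by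
    have h := hrel _ (by simp [tildeRels] : (⁅FreeGroup.of (2:Fin 5), FreeGroup.of 3⁆) ∈ tildeRels)
    rw [map_commutatorElement, hof, hof] at h
    exact commutatorElement_eq_one_iff_mul_comm.mp h
  have hce : (QuotientGroup.mk (γ 2) : Gtilde ⧸ N) * QuotientGroup.mk (γ 4) =
      QuotientGroup.mk (γ 4) * QuotientGroup.mk (γ 2) := by
    have h := hrel _ (by simp [tildeRels] : (⁅FreeGroup.of (2:Fin 5), FreeGroup.of 4⁆) ∈ tildeRels)
    rw [map_commutatorElement, hof, hof] at h
    exact commutatorElement_eq_one_iff_mul_comm.mp h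
  show (QuotientGroup.mk w : Gtilde ⧸ N) = 1
  rw [show w = γ 4 * γ 2 * γ 1 * (γ 3)⁻¹ * γ 1 * (γ 4 * γ 4)⁻¹ * γ 3 * (γ 4 * γ 4) * (γ 1)⁻¹ *
      γ 3 * (γ 4)⁻¹ * γ 3 * (γ 4 * γ 4) * γ 2 * γ 1 * (γ 4 * γ 4)⁻¹ * γ 3 * (γ 4 * γ 4) *
      (γ 1)⁻¹ * γ 3 * γ 1 * (γ 2 * γ 2)⁻¹ * γ 0 * (γ 2 * γ 2) * γ 0 from by
    rw [w]; ring_nf; rw [pow_two, pow_two]]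
  simp only [QuotientGroup.mk_mul, QuotientGroup.mk_inv]
  exact word_calc _ _ _ _ _ hbd hcd hce (hsq 0) (hsq 1) (hsq 2) (hsq 3) (hsq 4)
end
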